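/- (Theorem 4) Let U be a real orthogonal d×d matrix, let i < j, and let G be an extended orthogonal Givens transformation on (i,j) whose 2×2 block G̃ satisfies tr(G̃ᵀ U_{⟨i,j⟩}) = ‖U_{⟨i,j⟩}‖_*. If det(U_{⟨i,j⟩}) ≥ 0, then off(U Gᵀ)² ≤ off(U)² + ½·((U_ii − U_jj)² − (U_ij − U_ji)²); if det(U_{⟨i,j⟩}) < 0, then off(U Gᵀ)² ≤ off(U)² + ½·((U_ii + U_jj)² − (U_ij + U_ji)²). -/

import Mathlib

open Matrix

/-- Squared Frobenius norm of a real matrix. -/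
def frobSq {m n : ℕ} (A : Matrix (Fin m) (Fin n) ℝ) : ℝ := ∑ i, ∑ j, (A i j) ^ 2

/-- The singular values of a real square matrix `A`: the square roots of the
eigenvalues of `AᵀA` (here `Aᴴ = Aᵀ` since the matrix is real). -/
noncomputable def singVals {n : ℕ} (A : Matrix (Fin n) (Fin n) ℝ) : Fin n → ℝ :=
  fun i => Real.sqrt ((Matrix.isHermitian_conjTranspose_mul_self A).eigenvalues i)

/-- The nuclear norm of a real square matrix: the sum of its singular values. -/
noncomputable def nuclearNorm {n : ℕ} (A : Matrix (Fin n) (Fin n) ℝ) : ℝ :=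
  ∑ i, singVals A i

/-- The 2×2 submatrix `Z_{⟨i,j⟩} = [[Z_ii, Z_ij],[Z_ji, Z_jj]]`. -/
def sub2 {d : ℕ} (Z : Matrix (Fin d) (Fin d) ℝ) (i j : Fin d) : Matrix (Fin 2) (Fin 2) ℝ :=
  !![Z i i, Z i j; Z j i, Z j j]

/-- The score `C_ij(Z) = ‖Z_{⟨i,j⟩}‖_* − tr(Z_{⟨i,j⟩})`. -/
noncomputable def score {d : ℕ} (Z : Matrix (Fin d) (Fin d) ℝ) (i j : Fin d) : ℝ :=
  nuclearNorm (sub2 Z i j) - (sub2 Z i j).trace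

/-- An extended orthogonal Givens transformation on indices `i < j`: equal to the identity
except for the 2×2 block on rows/columns `i, j`, which is either a rotation
`[[c, −s],[s, c]]` or a reflection `[[c, s],[s, −c]]` with `c² + s² = 1`. -/
def IsExtGivens {d : ℕ} (i j : Fin d) (G : Matrix (Fin d) (Fin d) ℝ) : Prop :=
  (∃ c s : ℝ, c ^ 2 + s ^ 2 = 1 ∧
    ((G i i = c ∧ G i j = -s ∧ G j i = s ∧ G j j = c) ∨
     (G i i = c ∧ G i j = s ∧ G j i = s ∧ G j j = -c))) ∧
  (∀ k, k ≠ i → k ≠ j → G k k = 1) ∧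
  (∀ k l, k ≠ l → ¬(k = i ∧ l = j) → ¬(k = j ∧ l = i) → G k l = 0)

/-- A Givens rotation on indices `i < j`. -/
def IsGivensRotation {d : ℕ} (i j : Fin d) (G : Matrix (Fin d) (Fin d) ℝ) : Prop :=
  (∃ c s : ℝ, c ^ 2 + s ^ 2 = 1 ∧
    G i i = c ∧ G i j = -s ∧ G j i = s ∧ G j j = c) ∧
  (∀ k, k ≠ i → k ≠ j → G k k = 1) ∧
  (∀ k l, k ≠ l → ¬(k = i ∧ l = j) → ¬(k = j ∧ l = i) → G k l = 0)

/-- The squared off-diagonal "norm" `off(M)² = Σ_{t≠q} M_tq²`. -/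
def offSq {d : ℕ} (M : Matrix (Fin d) (Fin d) ℝ) : ℝ :=
  ∑ t, ∑ q, if t ≠ q then (M t q) ^ 2 else 0
lemma trace_eq_sum_eig {n : ℕ} (A : Matrix (Fin n) (Fin n) ℝ) (hA : A.IsHermitian) :
    A.trace = ∑ i, hA.eigenvalues i := by
  conv_lhs => rw [hA.spectral_theorem]
  rw [Unitary.conjStarAlgAut_apply]
  rw [Matrix.trace_mul_cycle]
  rw [show (star (hA.eigenvectorUnitary : Matrix (Fin n) (Fin n) ℝ)) *
      (hA.eigenvectorUnitary : Matrix (Fin n) (Fin n) ℝ) = 1 from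
    Unitary.coe_star_mul_self _, one_mul]
  simp [Matrix.trace_diagonal]

lemma nn_sq (A : Matrix (Fin 2) (Fin 2) ℝ) :
    nuclearNorm A ^ 2 = (∑ p, ∑ q, A p q ^ 2) + 2 * |A.det| := by
  have h := Matrix.isHermitian_conjTranspose_mul_self A
  have h0 : 0 ≤ h.eigenvalues 0 := Matrix.eigenvalues_conjTranspose_mul_self_nonneg A 0
  have h1 : 0 ≤ h.eigenvalues 1 := Matrix.eigenvalues_conjTranspose_mul_self_nonneg A 1
  have hsum : h.eigenvalues 0 + h.eigenvalues 1 = (Aᴴ * A).trace := by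
    rw [trace_eq_sum_eig _ h, Fin.sum_univ_two]
  have hprod : h.eigenvalues 0 * h.eigenvalues 1 = (Aᴴ * A).det := by
    rw [h.det_eq_prod_eigenvalues, Fin.prod_univ_two]; norm_num
  have htr : (Aᴴ * A).trace = ∑ p, ∑ q, A p q ^ 2 := by
    simp [Matrix.trace, Matrix.mul_apply, Fin.sum_univ_two, Matrix.conjTranspose_apply]
    ring
  have hdet : (Aᴴ * A).det = A.det ^ 2 := by
    rw [Matrix.det_mul, Matrix.det_conjTranspose]; simp [sq]
  have hnn : nuclearNorm A = Real.sqrt (h.eigenvalues 0) + Real.sqrt (h.eigenvalues 1) := by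
    rw [nuclearNorm, Fin.sum_univ_two]; rfl
  rw [hnn]
  have : Real.sqrt (h.eigenvalues 0) * Real.sqrt (h.eigenvalues 1) = |A.det| := by
    rw [← Real.sqrt_mul h0, hprod, hdet, Real.sqrt_sq_eq_abs]
  nlinarith [Real.sq_sqrt h0, Real.sq_sqrt h1, this, hsum, htr]

lemma sum_sub_two {d : ℕ} (i j : Fin d) (hij : i ≠ j) (f g : Fin d → ℝ)
    (h : ∀ q, q ≠ i → q ≠ j → f q = g q) :
    ∑ q, f q - ∑ q, g q = (f i + f j) - (g i + g j) := by
  have hsub : ({i, j} : Finset (Fin d)) ⊆ Finset.univ := Finset.subset_univ _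
  have := Finset.sum_subset hsub (f := fun q => f q - g q)
    (fun x _ hx => by
      simp only [Finset.mem_insert, Finset.mem_singleton] at hx
      push_neg at hx
      show f x - g x = 0
      rw [h x hx.1 hx.2]; ring)
  rw [← Finset.sum_sub_distrib, ← this, Finset.sum_pair hij]
  ring

lemma offSq_eq {d : ℕ} (M : Matrix (Fin d) (Fin d) ℝ) :
    offSq M = frobSq M - ∑ t, (M t t) ^ 2 := by
  unfold offSq frobSq
  rw [← Finset.sum_sub_distrib]
  apply Finset.sum_congr rfl
  intro t _
  have hsplit : ∀ q, (M t q) ^ 2 =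
      (if t ≠ q then (M t q)^2 else 0) + (if q = t then (M t q)^2 else 0) := by
    intro q
    by_cases h : t = q
    · subst h; simp
    · have h2 : ¬q = t := fun e => h e.symm
      simp [h, h2]
  rw [Finset.sum_congr rfl (fun q _ => hsplit q), Finset.sum_add_distrib,
    Finset.sum_ite_eq' Finset.univ t (fun q => (M t q)^2)]
  simp

/-- Theorem 4: if `U` is real orthogonal and `G` is an extended orthogonal Givens
transformation on `(i,j)` whose block `G̃` satisfies `tr(G̃ᵀ U_{⟨i,j⟩}) = ‖U_{⟨i,j⟩}‖_*`,
then `off(U Gᵀ)² ≤ off(U)² + ½((U_ii − U_jj)² − (U_ij − U_ji)²)` when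
`det U_{⟨i,j⟩} ≥ 0`, and `off(U Gᵀ)² ≤ off(U)² + ½((U_ii + U_jj)² − (U_ij + U_ji)²)`
when `det U_{⟨i,j⟩} < 0`. -/
theorem stmt13 {d : ℕ} (U G : Matrix (Fin d) (Fin d) ℝ) (hU : Uᵀ * U = 1)
    (i j : Fin d) (hij : i < j) (hG : IsExtGivens i j G)
    (hopt : ((sub2 G i j)ᵀ * sub2 U i j).trace = nuclearNorm (sub2 U i j)) :
    (0 ≤ (sub2 U i j).det →
      offSq (U * Gᵀ) ≤
        offSq U + (1 / 2) * ((U i i - U j j) ^ 2 - (U i j - U j i) ^ 2)) ∧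
    ((sub2 U i j).det < 0 →
      offSq (U * Gᵀ) ≤
        offSq U + (1 / 2) * ((U i i + U j j) ^ 2 - (U i j + U j i) ^ 2)) := by
  obtain ⟨⟨c, s, hcs, hblock⟩, hdiag, hoff⟩ := hG
  have hne : i ≠ j := ne_of_lt hij
  set V := U * Gᵀ with hV
  -- row structure of G
  have hGrow : ∀ q k, q ≠ i → q ≠ j → G q k = if k = q then 1 else 0 := by
    intro q k hqi hqj
    by_cases h : k = q
    · subst h; simp [hdiag k hqi hqj]
    · rw [hoff q k (fun e => h e.symm) (fun e => hqi e.1) (fun e => hqj e.1)]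
      simp [h]
  have hGi : ∀ k, G i k = (if k = i then G i i else 0) + (if k = j then G i j else 0) := by
    intro k
    by_cases h1 : k = i
    · subst h1; simp [hne]
    · by_cases h2 : k = j
      · subst h2; simp [hne.symm, Ne.symm hne]
      · rw [hoff i k (fun e => h1 e.symm) (fun e => h2 e.2) (fun e => hne e.1)]
        simp [h1, h2]
  have hGj : ∀ k, G j k = (if k = i then G j i else 0) + (if k = j then G j j else 0) := by
    intro k
    by_cases h1 : k = i
    · subst h1; simp [hne, Ne.symm hne]
    · by_cases h2 : k = j
      · subst h2; simp [hne.symm]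
      · rw [hoff j k (fun e => h2 e.symm) (fun e => hne.symm e.1) (fun e => h1 e.2)]
        simp [h1, h2]
  -- entries of V
  have hVapp : ∀ t q, V t q = ∑ k, U t k * G q k := by
    intro t q
    simp [hV, Matrix.mul_apply, Matrix.transpose_apply]
  have hVo : ∀ t q, q ≠ i → q ≠ j → V t q = U t q := by
    intro t q hqi hqj
    rw [hVapp]
    rw [Finset.sum_congr rfl (fun k _ => by rw [hGrow q k hqi hqj])]
    simp
  have hVi : ∀ t, V t i = U t i * G i i + U t j * G i j := by
    intro t
    rw [hVapp]
    have hk : ∀ k, U t k * G i k =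
        (if k = i then U t i * G i i else 0) + (if k = j then U t j * G i j else 0) := by
      intro k
      rw [hGi k]
      by_cases h1 : k = i
      · subst h1; simp [hne]
      · by_cases h2 : k = j
        · subst h2; simp [h1]
        · simp [h1, h2]
    rw [Finset.sum_congr rfl (fun k _ => hk k), Finset.sum_add_distrib]
    simp
  have hVj : ∀ t, V t j = U t i * G j i + U t j * G j j := by
    intro t
    rw [hVapp]
    have hk : ∀ k, U t k * G j k =
        (if k = i then U t i * G j i else 0) + (if k = j then U t j * G j j else 0) := by
      intro k
      rw [hGj k]
      by_cases h1 : k = i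
      · subst h1; simp [hne]
      · by_cases h2 : k = j
        · subst h2; simp [h1]
        · simp [h1, h2]
    rw [Finset.sum_congr rfl (fun k _ => hk k), Finset.sum_add_distrib]
    simp
  -- frobenius norm preserved
  have hrow : ∀ t, (V t i)^2 + (V t j)^2 = (U t i)^2 + (U t j)^2 := by
    intro t
    rw [hVi, hVj]
    rcases hblock with ⟨e1, e2, e3, e4⟩ | ⟨e1, e2, e3, e4⟩ <;>
      rw [e1, e2, e3, e4] <;> nlinarith [hcs]
  have hfrob : frobSq V = frobSq U := by
    unfold frobSq
    apply Finset.sum_congr rfl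
    intro t _
    have := sum_sub_two i j hne (fun q => (V t q)^2) (fun q => (U t q)^2)
      (fun q hqi hqj => by rw [hVo t q hqi hqj])
    rw [hrow t] at this
    linarith
  -- diagonal sums
  have hdiagsum : ∑ t, (V t t)^2 - ∑ t, (U t t)^2 =
      ((V i i)^2 + (V j j)^2) - ((U i i)^2 + (U j j)^2) := by
    have := sum_sub_two i j hne (fun q => (V q q)^2) (fun q => (U q q)^2)
      (fun q hqi hqj => by rw [hVo q q hqi hqj])
    simpa using this
  -- trace identity
  have htr : V i i + V j j = nuclearNorm (sub2 U i j) := by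
    rw [← hopt, hVi, hVj]
    simp only [Matrix.trace, Matrix.diag_apply, Matrix.mul_apply, Matrix.transpose_apply,
      Fin.sum_univ_two, sub2, Matrix.cons_val', Matrix.cons_val_zero, Matrix.cons_val_one,
      Matrix.head_cons, Matrix.head_fin_const, Matrix.empty_val', Matrix.cons_val_fin_one,
      Matrix.of_apply]
    ring
  -- nuclear norm squared
  have hnnsq : (nuclearNorm (sub2 U i j))^2 =
      ((U i i)^2 + (U i j)^2 + (U j i)^2 + (U j j)^2) + 2 * |(sub2 U i j).det| := by
    rw [nn_sq]
    congr 1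
    simp [sub2, Fin.sum_univ_two]
    ring
  have hdet2 : (sub2 U i j).det = U i i * U j j - U i j * U j i := by
    simp [sub2, Matrix.det_fin_two]
  -- main bound machinery
  have hkey : offSq V - offSq U = ((U i i)^2 + (U j j)^2) - ((V i i)^2 + (V j j)^2) := by
    rw [offSq_eq V, offSq_eq U, hfrob]
    linarith [hdiagsum]
  have hsq : ((V i i) + (V j j))^2 = (nuclearNorm (sub2 U i j))^2 := by rw [htr]
  have hineq : 2 * ((V i i)^2 + (V j j)^2) ≥ (nuclearNorm (sub2 U i j))^2 := by
    nlinarith [sq_nonneg (V i i - V j j), hsq]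
  constructor
  · intro hd
    have habs : |(sub2 U i j).det| = U i i * U j j - U i j * U j i := by
      rw [abs_of_nonneg hd, hdet2]
    rw [habs] at hnnsq
    nlinarith [hkey, hineq, hnnsq]
  · intro hd
    have habs : |(sub2 U i j).det| = -(U i i * U j j - U i j * U j i) := by
      rw [abs_of_neg hd, hdet2]
    rw [habs] at hnnsq
    nlinarith [hkey, hineq, hnnsq]
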